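/- Let κ be a regular cardinal and C a small category with fewer than κ morphisms. A presheaf P : Cᵒᵖ → Set is a κ-presentable (κ-compact) object of the presheaf category if and only if P(c) has cardinality less than κ for every object c of C. -/

import Mathlib

open CategoryTheory CategoryTheory.Limits

universe w v u

/-- A category `J` is `κ`-filtered if every diagram in `J` indexed by a category
with fewer than `κ` morphisms admits a cocone. -/
def IsCardFiltered (κ : Cardinal.{w}) (J : Type w) [SmallCategory J] : Prop :=
  ∀ (K : Type w) [SmallCategory K], Cardinal.mk (Σ a b : K, a ⟶ b) < κ →
    ∀ F : K ⥤ J, Nonempty (Cocone F)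

/-- An object `X` is `κ`-compact (κ-presentable) if `Hom(X, −)` preserves
`κ`-filtered colimits. -/
def IsKappaCompact (κ : Cardinal.{w}) {E : Type u} [Category.{v} E] (X : E) : Prop :=
  ∀ (J : Type w) [SmallCategory J], IsCardFiltered κ J →
    ∀ (F : J ⥤ E) (c : Cocone F), Nonempty (IsColimit c) →
      Nonempty (IsColimit ((coyoneda.obj (Opposite.op X)).mapCocone c))

namespace KC

/-! ### A "fan" shape category used to coequalize families of parallel pairs -/

inductive Fan (ι : Type u) : Type u
  | src : Fan ι
  | tgt : ι → Fan ι

variable {ι : Type u}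

def FanHom : Fan ι → Fan ι → Type u
  | .src, .src => PUnit
  | .src, .tgt _ => ULift Bool
  | .tgt i, .tgt i' => ULift (PLift (i = i'))
  | .tgt _, .src => PEmpty

instance : SmallCategory (Fan ι) where
  Hom := FanHom
  id a := match a with
    | .src => PUnit.unit
    | .tgt _ => ⟨⟨rfl⟩⟩
  comp {a b c} f g := match a, b, c, f, g with
    | .src, .src, .src, _, _ => PUnit.unit
    | .src, .src, .tgt _, _, g => g
    | .src, .tgt _, .tgt _, f, _ => f
    | .tgt _, .tgt _, .tgt _, f, g => ⟨⟨f.down.down.trans g.down.down⟩⟩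
    | .tgt _, .src, _, f, _ => f.elim
    | _, .tgt _, .src, _, g => g.elim
  id_comp {a b} f := by cases a <;> cases b <;> first | rfl | exact f.elim
  comp_id {a b} f := by cases a <;> cases b <;> first | rfl | exact f.elim
  assoc {a b c d} f g h := by
    cases a <;> cases b <;> cases c <;> cases d <;>
      first | rfl | exact f.elim | exact g.elim | exact h.elim

variable {κ : Cardinal.{u}}

lemma mk_fan_sigma_lt (hκ : κ.IsRegular) (hι : Cardinal.mk ι < κ) :
    Cardinal.mk (Σ a b : Fan ι, a ⟶ b) < κ := by
  have hsurj : Function.Surjective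
      (fun x : Fan ι ⊕ ι × ULift.{u} Bool => match x with
        | .inl a => (⟨a, a, 𝟙 a⟩ : Σ a b : Fan ι, a ⟶ b)
        | .inr (i, b) => ⟨.src, .tgt i, b⟩) := by
    rintro ⟨a, b, h⟩
    cases a <;> cases b
    · exact ⟨.inl .src, rfl⟩
    · exact ⟨.inr (_, h), rfl⟩
    · exact h.elim
    · obtain ⟨⟨rfl⟩⟩ := h
      exact ⟨.inl (.tgt _), rfl⟩
  refine lt_of_le_of_lt (Cardinal.mk_le_of_surjective hsurj) ?_
  have h1 : Cardinal.mk (Fan ι) < κ := by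
    have : Function.Surjective (fun x : Option ι => match x with
        | .none => Fan.src | .some i => Fan.tgt i) := by
      rintro (_ | i); exacts [⟨.none, rfl⟩, ⟨.some i, rfl⟩]
    refine lt_of_le_of_lt (Cardinal.mk_le_of_surjective this) ?_
    rw [Cardinal.mk_option]
    exact Cardinal.add_lt_of_lt hκ.aleph0_le hι
      (lt_of_lt_of_le Cardinal.one_lt_aleph0 hκ.aleph0_le)
  have h2 : Cardinal.mk (ι × ULift.{u} Bool) < κ := by
    rw [Cardinal.mk_prod, Cardinal.lift_id, Cardinal.lift_id]
    exact Cardinal.mul_lt_of_lt hκ.aleph0_le hι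
      (lt_of_lt_of_le (Cardinal.lt_aleph0_of_finite _) hκ.aleph0_le)
  rw [Cardinal.mk_sum, Cardinal.lift_id, Cardinal.lift_id]
  exact Cardinal.add_lt_of_lt hκ.aleph0_le h1 h2

lemma mk_discrete_sigma_lt (hι : Cardinal.mk ι < κ) :
    Cardinal.mk (Σ a b : Discrete ι, a ⟶ b) < κ := by
  have hsurj : Function.Surjective
      (fun i : ι => (⟨⟨i⟩, ⟨i⟩, 𝟙 _⟩ : Σ a b : Discrete ι, a ⟶ b)) := by
    rintro ⟨⟨a⟩, ⟨b⟩, h⟩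
    obtain rfl : a = b := h.down.down
    exact ⟨a, by congr⟩
  exact lt_of_le_of_lt (Cardinal.mk_le_of_surjective hsurj) hι

variable {J : Type u} [SmallCategory J]

lemma exists_upper (hJ : IsCardFiltered κ J) (hι : Cardinal.mk ι < κ) (j : ι → J) :
    ∃ j₀ : J, ∀ i, Nonempty (j i ⟶ j₀) := by
  obtain ⟨c⟩ := hJ (Discrete ι) (mk_discrete_sigma_lt hι) (Discrete.functor j)
  exact ⟨c.pt, fun i => ⟨c.ι.app ⟨i⟩⟩⟩

/-- The functor from the fan shape determined by a family of parallel pairs. -/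
def fanFunctor (j₀ : J) (k : ι → J) (f g : ∀ i, j₀ ⟶ k i) : Fan ι ⥤ J where
  obj a := match a with | .src => j₀ | .tgt i => k i
  map {a b} h := match a, b, h with
    | .src, .src, _ => 𝟙 j₀
    | .src, .tgt i, h => (match h.down with | true => f i | false => g i)
    | .tgt _, .tgt _, h => eqToHom (congrArg k h.down.down)
    | .tgt _, .src, h => h.elim
  map_id a := by cases a <;> rfl
  map_comp {a b c} h h' := by
    cases a <;> cases b <;> cases c
    · exact (Category.comp_id _).symm
    · exact (Category.id_comp _).symm
    · exact h'.elim
    · obtain ⟨⟨rfl⟩⟩ := h'; exact (Category.comp_id _).symm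
    · exact h.elim
    · exact h.elim
    · exact h'.elim
    · obtain ⟨⟨rfl⟩⟩ := h; obtain ⟨⟨rfl⟩⟩ := h'; exact (Category.comp_id _).symm

/-- In a κ-filtered category, any κ-small family of parallel pairs with common
source can be simultaneously coequalized. -/
lemma exists_coeq (hJ : IsCardFiltered κ J) (hκ : κ.IsRegular)
    (hι : Cardinal.mk ι < κ) (j₀ : J) (k : ι → J) (f g : ∀ i, j₀ ⟶ k i) :
    ∃ (t : J) (w : j₀ ⟶ t), ∀ i, ∃ m : k i ⟶ t, f i ≫ m = w ∧ g i ≫ m = w := by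
  obtain ⟨c⟩ := hJ (Fan ι) (mk_fan_sigma_lt hκ hι) (fanFunctor j₀ k f g)
  refine ⟨c.pt, c.ι.app .src, fun i => ⟨c.ι.app (.tgt i), ?_, ?_⟩⟩
  · exact c.w (show Fan.src ⟶ Fan.tgt i from ULift.up true)
  · exact c.w (show Fan.src ⟶ Fan.tgt i from ULift.up false)

lemma isFilteredOrEmpty (hJ : IsCardFiltered κ J) (hκ : κ.IsRegular) :
    IsFilteredOrEmpty J where
  cocone_objs X Y := by
    obtain ⟨j₀, h⟩ := exists_upper hJ
      (show Cardinal.mk (ULift.{u} Bool) < κ from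
        lt_of_lt_of_le (Cardinal.lt_aleph0_of_finite _) hκ.aleph0_le)
      (fun b => match b.down with | true => X | false => Y)
    exact ⟨j₀, (h ⟨true⟩).some, (h ⟨false⟩).some, trivial⟩
  cocone_maps {X Y} f g := by
    obtain ⟨t, w, hm⟩ := exists_coeq hJ hκ
      (show Cardinal.mk PUnit.{u+1} < κ from
        lt_of_lt_of_le (Cardinal.lt_aleph0_of_finite _) hκ.aleph0_le)
      X (fun _ => Y) (fun _ => f) (fun _ => g)
    obtain ⟨m, h1, h2⟩ := hm ⟨⟩
    exact ⟨t, m, h1.trans h2.symm⟩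

lemma mk_obj_lt {C : Type u} [SmallCategory C]
    (hC : Cardinal.mk (Σ X Y : C, X ⟶ Y) < κ) : Cardinal.mk C < κ :=
  lt_of_le_of_lt (Cardinal.mk_le_of_injective
    (f := fun X : C => (⟨X, X, 𝟙 X⟩ : Σ X Y : C, X ⟶ Y))
    (fun _ _ e => congrArg Sigma.fst e)) hC

lemma mk_over_lt {C : Type u} [SmallCategory C]
    (hC : Cardinal.mk (Σ X Y : C, X ⟶ Y) < κ) (c : C) :
    Cardinal.mk (Σ a : C, a ⟶ c) < κ := by
  refine lt_of_le_of_lt (Cardinal.mk_le_of_injective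
    (f := fun p : Σ a : C, a ⟶ c => (⟨p.1, c, p.2⟩ : Σ X Y : C, X ⟶ Y)) ?_) hC
  rintro ⟨a, h⟩ ⟨a', h'⟩ e
  obtain ⟨rfl, e2⟩ := Sigma.mk.inj_iff.mp e
  obtain ⟨-, e3⟩ := Sigma.mk.inj_iff.mp (eq_of_heq e2)
  exact Sigma.ext rfl e3

/-! ### The poset of κ-small closed subsets of elements of a presheaf -/

section Forward

open CategoryTheory.GrothendieckTopology

variable {C : Type u} [SmallCategory C] (P : Cᵒᵖ ⥤ Type u) (κ : Cardinal.{u})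

/-- Elements of the presheaf `P`. -/
abbrev Elts : Type u := Σ c : C, P.obj (Opposite.op c)

/-- A set of elements closed under the presheaf action. -/
def IsClosed (A : Set (Elts P)) : Prop :=
  ∀ x ∈ A, ∀ (a : C) (h : a ⟶ x.1), (⟨a, P.map h.op x.2⟩ : Elts P) ∈ A

/-- The poset of closed κ-small sets of elements. -/
def SubIdx : Type u := {A : Set (Elts P) // IsClosed P A ∧ Cardinal.mk A < κ}

instance : PartialOrder (SubIdx P κ) := Subtype.partialOrder _

instance : SmallCategory (SubIdx P κ) := Preorder.smallCategory _

/-- The subpresheaf attached to a closed set of elements. -/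
def toSub (A : SubIdx P κ) : Subfunctor P where
  obj U := {x | (⟨U.unop, x⟩ : Elts P) ∈ A.1}
  map {U V} h x hx := A.2.1 _ hx V.unop h.unop

lemma toSub_mono {A B : SubIdx P κ} (h : A ≤ B) : toSub P κ A ≤ toSub P κ B :=
  fun _ _ hx => h hx

/-- The diagram of closed κ-small subpresheaves of `P`. -/
def subDiagram : SubIdx P κ ⥤ (Cᵒᵖ ⥤ Type u) where
  obj A := (toSub P κ A).toFunctor
  map {A B} h := Subfunctor.homOfLe (toSub_mono P κ (leOfHom h))
  map_id A := by ext U x; rfl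
  map_comp h h' := by ext U x; rfl

/-- The canonical cocone of this diagram with point `P`. -/
def subCocone : Cocone (subDiagram P κ) where
  pt := P
  ι :=
    { app := fun A => (toSub P κ A).ι
      naturality := fun A B h => by simp [subDiagram] }

lemma subIdx_isCardFiltered (hκ : κ.IsRegular) : IsCardFiltered κ (SubIdx P κ) := by
  intro K _ hK F
  have hKcard : Cardinal.mk K < κ :=
    lt_of_le_of_lt (Cardinal.mk_le_of_injective
      (f := fun k : K => (⟨k, k, 𝟙 k⟩ : Σ a b : K, a ⟶ b))
      (fun _ _ e => congrArg Sigma.fst e)) hK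
  have hcl : IsClosed P (⋃ k, (F.obj k).1) := by
    rintro x hx a h
    obtain ⟨k, hk⟩ := Set.mem_iUnion.mp hx
    exact Set.mem_iUnion.mpr ⟨k, (F.obj k).2.1 x hk a h⟩
  have hcard : Cardinal.mk (⋃ k, (F.obj k).1 : Set (Elts P)) < κ :=
    lt_of_le_of_lt Cardinal.mk_iUnion_le_sum_mk
      (Cardinal.sum_lt_of_isRegular hκ hKcard fun k => (F.obj k).2.2)
  exact ⟨{ pt := ⟨⋃ k, (F.obj k).1, hcl, hcard⟩
           ι := { app := fun k => homOfLE (Set.subset_iUnion (fun k => (F.obj k).1) k)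
                  naturality := fun _ _ _ => Subsingleton.elim _ _ } }⟩

noncomputable def subCocone_isColimit (hκ : κ.IsRegular)
    (hC : Cardinal.mk (Σ X Y : C, X ⟶ Y) < κ) : IsColimit (subCocone P κ) := by
  apply evaluationJointlyReflectsColimits
  intro U
  apply Types.FilteredColimit.isColimitOf
  · -- joint surjectivity via orbits
    intro x
    refine ⟨⟨{s : Elts P | ∃ h : s.1 ⟶ U.unop, s.2 = P.map h.op x}, ?_, ?_⟩,
      Subtype.mk x ⟨𝟙 U.unop, by simp; rfl⟩, rfl⟩
    · rintro ⟨b, y⟩ ⟨h, hy⟩ a h'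
      refine ⟨h' ≫ h, ?_⟩
      dsimp at hy ⊢
      rw [hy]
      simp [FunctorToTypes.map_comp_apply]; rfl
    · have hsur : Function.Surjective (fun p : Σ a : C, a ⟶ U.unop =>
          (⟨⟨p.1, P.map p.2.op x⟩, ⟨p.2, rfl⟩⟩ :
            {s : Elts P | ∃ h : s.1 ⟶ U.unop, s.2 = P.map h.op x})) := by
        rintro ⟨⟨b, y⟩, h, hy⟩
        refine ⟨⟨b, h⟩, Subtype.ext ?_⟩
        dsimp at hy ⊢
        rw [hy]
      exact lt_of_le_of_lt (Cardinal.mk_le_of_surjective hsur) (mk_over_lt hC U.unop)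
  · -- identifications
    intro A B xa xb e
    have hcl : IsClosed P (A.1 ∪ B.1) := by
      rintro x (hx | hx) a h
      · exact Or.inl (A.2.1 x hx a h)
      · exact Or.inr (B.2.1 x hx a h)
    have hcard : Cardinal.mk (A.1 ∪ B.1 : Set (Elts P)) < κ :=
      lt_of_le_of_lt (Cardinal.mk_union_le _ _)
        (Cardinal.add_lt_of_lt hκ.aleph0_le A.2.2 B.2.2)
    refine ⟨⟨A.1 ∪ B.1, hcl, hcard⟩,
      homOfLE Set.subset_union_left, homOfLE Set.subset_union_right, ?_⟩
    apply Subtype.ext; exact e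

end Forward

end KC

/-- For a regular cardinal `κ` and a small category `C` with fewer than `κ` morphisms,
a presheaf `P : Cᵒᵖ ⥤ Type u` is `κ`-compact iff each `P(c)` has cardinality `< κ`. -/
theorem presheaf_kappaCompact_iff_pointwise_small
    {C : Type u} [SmallCategory C] (κ : Cardinal.{u}) (hκ : κ.IsRegular)
    (hC : Cardinal.mk (Σ X Y : C, X ⟶ Y) < κ) (P : Cᵒᵖ ⥤ Type u) :
    IsKappaCompact.{u} κ P ↔ ∀ c : C, Cardinal.mk (P.obj (Opposite.op c)) < κ := by
  constructor
  · -- κ-compact implies pointwise small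
    intro hP c₀
    obtain ⟨hcolim⟩ := hP (KC.SubIdx P κ) (KC.subIdx_isCardFiltered P κ hκ)
      (KC.subDiagram P κ) (KC.subCocone P κ) ⟨KC.subCocone_isColimit P κ hκ hC⟩
    obtain ⟨A, g, hg⟩ := Types.jointly_surjective _ hcolim (𝟙 P)
    replace hg : g ≫ (KC.toSub P κ A).ι = 𝟙 P := hg
    have hval : ∀ x : P.obj (Opposite.op c₀), Subtype.val (g.app (Opposite.op c₀) x) = x :=
      fun x => types_congr_hom (congr_app hg (Opposite.op c₀)) x
    have h1 : Cardinal.mk (P.obj (Opposite.op c₀)) ≤ Cardinal.mk A.1 := by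
      refine Cardinal.mk_le_of_injective
        (f := fun x => (⟨⟨c₀, (g.app (Opposite.op c₀) x).val⟩,
          (g.app (Opposite.op c₀) x).2⟩ : A.1)) ?_
      intro x y e
      have h2 : (⟨c₀, (g.app (Opposite.op c₀) x).val⟩ : KC.Elts P)
          = ⟨c₀, (g.app (Opposite.op c₀) y).val⟩ := congrArg Subtype.val e
      have h3 := eq_of_heq (Sigma.mk.inj_iff.mp h2).2
      rw [hval x, hval y] at h3
      exact h3
    exact lt_of_le_of_lt h1 A.2.2
  · -- pointwise small implies κ-compact
    intro hsmall J _ hJ F c hc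
    obtain ⟨hc⟩ := hc
    haveI : IsFilteredOrEmpty J := KC.isFilteredOrEmpty hJ hκ
    have tc : ∀ a : C, IsColimit
        (((evaluation Cᵒᵖ (Type u)).obj (Opposite.op a)).mapCocone c) :=
      fun a => isColimitOfPreserves _ hc
    have hS : Cardinal.mk (KC.Elts P) < κ := by
      rw [Cardinal.mk_sigma]
      exact Cardinal.sum_lt_of_isRegular hκ (KC.mk_obj_lt hC) fun a => hsmall a
    constructor
    refine Types.FilteredColimit.isColimitOf _ _ ?_ ?_
    · -- surjectivity: every map P ⟶ c.pt factors through a stage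
      intro f
      change P ⟶ c.pt at f
      have hex : ∀ s : KC.Elts P, ∃ (j : J) (y : (F.obj j).obj (Opposite.op s.1)),
          (c.ι.app j).app (Opposite.op s.1) y = f.app (Opposite.op s.1) s.2 :=
        fun s => Types.jointly_surjective _ (tc s.1) (f.app (Opposite.op s.1) s.2)
      choose js ys hys using hex
      obtain ⟨j₁, hj₁⟩ := KC.exists_upper hJ hS js
      have us : ∀ s, js s ⟶ j₁ := fun s => (hj₁ s).some
      let g₀ : ∀ a : C, P.obj (Opposite.op a) → (F.obj j₁).obj (Opposite.op a) :=
        fun a x => (F.map (us ⟨a, x⟩)).app (Opposite.op a) (ys ⟨a, x⟩)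
      have hg₀ : ∀ (a : C) (x : P.obj (Opposite.op a)),
          (c.ι.app j₁).app (Opposite.op a) (g₀ a x) = f.app (Opposite.op a) x := by
        intro a x
        have h1 := types_congr_hom (congr_app (c.w (us ⟨a, x⟩)) (Opposite.op a)) (ys ⟨a, x⟩)
        exact h1.trans (hys ⟨a, x⟩)
      -- naturality defects
      let T : Type u := Σ p : (Σ X Y : C, X ⟶ Y), P.obj (Opposite.op p.2.1)
      have hT : Cardinal.mk T < κ := by
        rw [Cardinal.mk_sigma]
        exact Cardinal.sum_lt_of_isRegular hκ hC fun p => hsmall p.2.1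
      let e₁ : ∀ t : T, (F.obj j₁).obj (Opposite.op t.1.1) :=
        fun t => (F.obj j₁).map t.1.2.2.op (g₀ t.1.2.1 t.2)
      let e₂ : ∀ t : T, (F.obj j₁).obj (Opposite.op t.1.1) :=
        fun t => g₀ t.1.1 (P.map t.1.2.2.op t.2)
      have key : ∀ t : T, (c.ι.app j₁).app (Opposite.op t.1.1) (e₁ t)
          = (c.ι.app j₁).app (Opposite.op t.1.1) (e₂ t) := by
        rintro ⟨⟨a, b, h⟩, x⟩
        have n1 := types_congr_hom ((c.ι.app j₁).naturality h.op) (g₀ b x)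
        have n2 := types_congr_hom (f.naturality h.op) x
        dsimp [e₁, e₂] at n1 n2 ⊢
        rw [n1, hg₀ b x, ← n2, hg₀ a (P.map h.op x)]
      have heq : ∀ t : T, ∃ (k : J) (φ ψ : j₁ ⟶ k),
          (F.map φ).app (Opposite.op t.1.1) (e₁ t)
            = (F.map ψ).app (Opposite.op t.1.1) (e₂ t) := by
        intro t
        exact (Types.FilteredColimit.isColimit_eq_iff
          (F ⋙ (evaluation Cᵒᵖ (Type u)).obj (Opposite.op t.1.1)) (tc t.1.1)).mp (key t)
      choose ks φs ψs hφψ using heq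
      obtain ⟨t₀, w, hw⟩ := KC.exists_coeq hJ hκ hT j₁ ks φs ψs
      choose ms hm1 hm2 using hw
      have hkey2 : ∀ t : T, (F.map w).app (Opposite.op t.1.1) (e₁ t)
          = (F.map w).app (Opposite.op t.1.1) (e₂ t) := by
        intro t
        have h1 : (F.map w).app (Opposite.op t.1.1) (e₁ t)
            = (F.map (ms t)).app (Opposite.op t.1.1)
              ((F.map (φs t)).app (Opposite.op t.1.1) (e₁ t)) := by
          rw [← hm1 t, F.map_comp]; rfl
        have h2 : (F.map w).app (Opposite.op t.1.1) (e₂ t)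
            = (F.map (ms t)).app (Opposite.op t.1.1)
              ((F.map (ψs t)).app (Opposite.op t.1.1) (e₂ t)) := by
          rw [← hm2 t, F.map_comp]; rfl
        rw [h1, h2, hφψ t]
      let g₁ : P ⟶ F.obj t₀ :=
        { app := fun U => TypeCat.ofHom fun x => (F.map w).app U (g₀ U.unop x)
          naturality := by
            intro U V h
            ext x
            have n1 := types_congr_hom ((F.map w).naturality h) (g₀ U.unop x)
            have n2 := hkey2 ⟨⟨V.unop, U.unop, h.unop⟩, x⟩
            dsimp [e₁, e₂] at n1 n2 ⊢
            rw [← n1, n2] }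
      have hfin : f = g₁ ≫ c.ι.app t₀ := by
        ext U x
        have h1 := types_congr_hom (congr_app (c.w w) U) (g₀ U.unop x)
        exact ((h1.trans (hg₀ U.unop x)).symm : _)
      exact ⟨t₀, g₁, hfin⟩
    · -- injectivity
      intro i j α β e
      replace e : α ≫ c.ι.app i = β ≫ c.ι.app j := e
      obtain ⟨k₀, u₀, v₀, -⟩ := IsFilteredOrEmpty.cocone_objs i j
      have e' : (α ≫ F.map u₀) ≫ c.ι.app k₀ = (β ≫ F.map v₀) ≫ c.ι.app k₀ := by
        simp only [Category.assoc, c.w]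
        exact e
      have hex : ∀ s : KC.Elts P, ∃ (k : J) (φ ψ : k₀ ⟶ k),
          (F.map φ).app (Opposite.op s.1) ((α ≫ F.map u₀).app (Opposite.op s.1) s.2)
            = (F.map ψ).app (Opposite.op s.1) ((β ≫ F.map v₀).app (Opposite.op s.1) s.2) :=
        fun s => (Types.FilteredColimit.isColimit_eq_iff
          (F ⋙ (evaluation Cᵒᵖ (Type u)).obj (Opposite.op s.1)) (tc s.1)).mp
          (types_congr_hom (congr_app e' (Opposite.op s.1)) s.2)
      choose ks φs ψs hk using hex
      obtain ⟨t₀, w, hw⟩ := KC.exists_coeq hJ hκ hS k₀ ks φs ψs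
      choose ms hm1 hm2 using hw
      refine ⟨t₀, u₀ ≫ w, v₀ ≫ w, ?_⟩
      show α ≫ F.map (u₀ ≫ w) = β ≫ F.map (v₀ ≫ w)
      ext U x
      have h1 : F.map (u₀ ≫ w) = F.map u₀ ≫ F.map (φs ⟨U.unop, x⟩ ≫ ms ⟨U.unop, x⟩) := by
        rw [hm1 ⟨U.unop, x⟩, F.map_comp]
      have h2 : F.map (v₀ ≫ w) = F.map v₀ ≫ F.map (ψs ⟨U.unop, x⟩ ≫ ms ⟨U.unop, x⟩) := by
        rw [hm2 ⟨U.unop, x⟩, F.map_comp]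
      rw [h1, h2, F.map_comp, F.map_comp]
      dsimp
      have := congrArg ((F.map (ms ⟨U.unop, x⟩)).app U) (hk ⟨U.unop, x⟩)
      dsimp at this
      exact this
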